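/- Let E ⊆ ℝ × (0,π) be a Lebesgue null set, viewed as a set of lines in ℝ² not parallel to the x-axis parametrized by (x, θ) where x is the intersection with the x-axis and θ the angle with the x-axis. Then for almost every point (x₀,y₀) ∈ ℝ², the set of angles θ ∈ (0,π) such that the line through (x₀,y₀) with angle θ lies in E has measure zero. -/

import Mathlib

open MeasureTheory Real

private lemma shear_measurePreserving (c : ℝ → ℝ) (hcm : Measurable c) :
    MeasurePreserving
      (fun q : (ℝ × ℝ) × ℝ => ((q.1.1 - q.1.2 * c q.2, q.2), q.1.2))
      volume volume := by
  have h1 : MeasurePreserving (MeasurableEquiv.prodAssoc : ((ℝ × ℝ) × ℝ) ≃ᵐ _)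
      volume volume := measurePreserving_prodAssoc volume volume volume
  have h2 : MeasurePreserving (Prod.swap : ℝ × (ℝ × ℝ) → (ℝ × ℝ) × ℝ)
      volume volume := Measure.measurePreserving_swap
  have h3 : MeasurePreserving
      (fun p : (ℝ × ℝ) × ℝ => (p.1, p.2 - p.1.1 * c p.1.2)) volume volume := by
    have h : MeasurePreserving
        (fun p : (ℝ × ℝ) × ℝ => (id p.1, p.2 - p.1.1 * c p.1.2))
        ((volume : Measure (ℝ × ℝ)).prod volume)
        ((volume : Measure (ℝ × ℝ)).prod volume) := by
      have hg : ∀ᵐ a : ℝ × ℝ ∂(volume : Measure (ℝ × ℝ)),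
          Measure.map (fun x : ℝ => x - a.1 * c a.2) volume = volume := by
        refine Filter.Eventually.of_forall fun a => ?_
        have he : (fun x : ℝ => x - a.1 * c a.2) = fun x => x + (-(a.1 * c a.2)) := by
          funext x; ring
        rw [he, map_add_right_eq_self volume _]
      exact MeasurePreserving.skew_product (g := fun (a : ℝ × ℝ) (x : ℝ) => x - a.1 * c a.2) (MeasurePreserving.id (volume : Measure (ℝ × ℝ)))
        (measurable_snd.sub ((measurable_fst.fst).mul (hcm.comp measurable_fst.snd))) hg
    exact h
  have h4 : MeasurePreserving (Prod.swap : (ℝ × ℝ) × ℝ → ℝ × (ℝ × ℝ))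
      volume volume := Measure.measurePreserving_swap
  have h5 : MeasurePreserving (Prod.map (id : ℝ → ℝ) (Prod.swap : ℝ × ℝ → ℝ × ℝ))
      volume volume :=
    MeasurePreserving.prod (MeasurePreserving.id volume) (Measure.measurePreserving_swap)
  have h6 : MeasurePreserving
      (MeasurableEquiv.prodAssoc.symm : (ℝ × (ℝ × ℝ)) ≃ᵐ ((ℝ × ℝ) × ℝ))
      volume volume :=
    (measurePreserving_prodAssoc volume volume volume).symm MeasurableEquiv.prodAssoc
  have := ((((h6.comp h5).comp h4).comp h3).comp h2).comp h1
  convert this using 1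
  funext q
  rfl

theorem null_set_of_lines_through_ae_point
    (E : Set (ℝ × ℝ)) (hE : E ⊆ Set.univ ×ˢ Set.Ioo 0 π) (hE0 : volume E = 0) :
    ∀ᵐ p : ℝ × ℝ, volume {θ : ℝ | θ ∈ Set.Ioo 0 π ∧
      (p.1 - p.2 * (Real.cos θ / Real.sin θ), θ) ∈ E} = 0 := by
  set c : ℝ → ℝ := fun θ => Real.cos θ / Real.sin θ with hc
  have hcm : Measurable c := Real.measurable_cos.div Real.measurable_sin
  set E' := toMeasurable volume E with hE'def
  have hE'm : MeasurableSet E' := measurableSet_toMeasurable _ _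
  have hE'0 : volume E' = 0 := by rw [measure_toMeasurable]; exact hE0
  have hEE' : E ⊆ E' := subset_toMeasurable _ _
  set Φ : (ℝ × ℝ) × ℝ → (ℝ × ℝ) × ℝ :=
    fun q => ((q.1.1 - q.1.2 * c q.2, q.2), q.1.2) with hΦdef
  have hΦ : MeasurePreserving Φ volume volume := shear_measurePreserving c hcm
  have key : volume (Φ ⁻¹' (E' ×ˢ (Set.univ : Set ℝ))) = 0 := by
    rw [hΦ.measure_preimage (hE'm.prod MeasurableSet.univ).nullMeasurableSet]
    rw [show (volume : Measure ((ℝ × ℝ) × ℝ)) = (volume : Measure (ℝ × ℝ)).prod volume from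
      rfl, Measure.prod_prod, hE'0, zero_mul]
  have h2 : ∀ᵐ p : ℝ × ℝ, volume (Prod.mk p ⁻¹' (Φ ⁻¹' (E' ×ˢ (Set.univ : Set ℝ)))) = 0 :=
    Measure.measure_ae_null_of_prod_null key
  filter_upwards [h2] with p hp
  refine measure_mono_null ?_ hp
  intro θ hθ
  simp only [Set.mem_setOf_eq] at hθ
  simp only [Set.mem_preimage, hΦdef, Set.mem_prod, Set.mem_univ, and_true]
  exact hEE' hθ.2
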